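/- Let X be a locally finite graph with symmetric edge weights b, let V, f ∈ C(X) with f > 0, and u finitely supported. Then ∑_x V(x)|∇u|²(x) − ∑_x (T(V,f)(x)/f(x)) u(x)² = (1/2) ∑_{x,y} b(x,y) V(x) ( √(f(x)/f(y)) u(y) − √(f(y)/f(x)) u(x) )², where T(V,f)(x) = V(x)Δf(x) − ⟨∇f,∇V⟩_x. -/
import Mathlib


/-- Graph Laplacian `Δf(x) = ∑_{y} b(x,y)(f(x) − f(y))`. -/
noncomputable def graphLap {X : Type*} (b : X → X → ℝ) (f : X → ℝ) (x : X) : ℝ :=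
  ∑' y, b x y * (f x - f y)

/-- Pointwise squared gradient `|∇u|²(x) = (1/2)∑_y b(x,y)(u(x) − u(y))²`. -/
noncomputable def graphGradSq {X : Type*} (b : X → X → ℝ) (u : X → ℝ) (x : X) : ℝ :=
  (1 / 2) * ∑' y, b x y * (u x - u y) ^ 2

/-- `⟨∇f, ∇V⟩_x = (1/2)∑_y b(x,y)(f(x) − f(y))(V(x) − V(y))`. -/
noncomputable def graphGradInner {X : Type*} (b : X → X → ℝ) (f V : X → ℝ) (x : X) : ℝ :=
  (1 / 2) * ∑' y, b x y * (f x - f y) * (V x - V y)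

/-- `T(V,f)(x) = V(x)Δf(x) − ⟨∇f, ∇V⟩_x`. -/
noncomputable def graphT {X : Type*} (b : X → X → ℝ) (V f : X → ℝ) (x : X) : ℝ :=
  V x * graphLap b f x - graphGradInner b f V x

/-- The first order weighted Hardy equality on a locally finite graph. -/
theorem graph_weighted_hardy_equality {X : Type*} (b : X → X → ℝ)
    (hsym : ∀ x y, b x y = b y x) (hnonneg : ∀ x y, 0 ≤ b x y)
    (hdiag : ∀ x, b x x = 0) (hlf : ∀ x, {y | b x y ≠ 0}.Finite)
    (V f u : X → ℝ) (hf : ∀ x, 0 < f x) (hu : (Function.support u).Finite) :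
    ∑' x, V x * graphGradSq b u x - ∑' x, (graphT b V f x / f x) * (u x) ^ 2 =
      (1 / 2) * ∑' x, ∑' y, b x y * V x *
        (Real.sqrt (f x / f y) * u y - Real.sqrt (f y / f x) * u x) ^ 2 := by
  classical
  set F : Finset X := hu.toFinset ∪ hu.toFinset.biUnion (fun y => (hlf y).toFinset) with hFdef
  have hsupp : ∀ x, u x ≠ 0 → x ∈ F := fun x hx =>
    Finset.mem_union_left _ (hu.mem_toFinset.2 hx)
  have hnb : ∀ x y, u x ≠ 0 → b x y ≠ 0 → y ∈ F := fun x y hx hb =>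
    Finset.mem_union_right _ (Finset.mem_biUnion.2
      ⟨x, hu.mem_toFinset.2 hx, (hlf x).mem_toFinset.2 hb⟩)
  have hnb' : ∀ x y, u y ≠ 0 → b x y ≠ 0 → x ∈ F := fun x y hy hb =>
    hnb y x hy (by rw [hsym y x]; exact hb)
  -- Step 1: first sum
  have key1 : ∑' x, V x * graphGradSq b u x
      = (1/2 : ℝ) * ∑ x ∈ F, ∑ y ∈ F, b x y * V x * (u x - u y) ^ 2 := by
    have h2 : ∀ x, graphGradSq b u x = (1/2 : ℝ) * ∑ y ∈ F, b x y * (u x - u y) ^ 2 := by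
      intro x
      unfold graphGradSq
      congr 1
      refine tsum_eq_sum ?_
      intro y hy
      by_cases hb : b x y = 0
      · simp [hb]
      · have hux : u x = 0 := by by_contra h; exact hy (hnb x y h hb)
        have huy : u y = 0 := by by_contra h; exact hy (hsupp y h)
        simp [hux, huy]
    have h1 : ∀ x ∉ F, V x * graphGradSq b u x = 0 := by
      intro x hx
      rw [h2 x]
      have : ∑ y ∈ F, b x y * (u x - u y) ^ 2 = 0 := by
        refine Finset.sum_eq_zero fun y _ => ?_
        by_cases hb : b x y = 0
        · simp [hb]
        · have hux : u x = 0 := by by_contra h; exact hx (hsupp x h)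
          have huy : u y = 0 := by by_contra h; exact hx (hnb' x y h hb)
          simp [hux, huy]
      simp [this]
    rw [tsum_eq_sum h1, Finset.mul_sum]
    refine Finset.sum_congr rfl fun x _ => ?_
    rw [h2 x, Finset.mul_sum, Finset.mul_sum, Finset.mul_sum]
    exact Finset.sum_congr rfl fun y _ => by ring
  -- Step 2: second sum
  have key2 : ∑' x, (graphT b V f x / f x) * (u x) ^ 2
      = (1/2 : ℝ) * ∑ x ∈ F, ∑ y ∈ F,
          b x y * (f x - f y) * (V x + V y) * u x ^ 2 / f x := by
    have h1 : ∀ x ∉ F, (graphT b V f x / f x) * (u x) ^ 2 = 0 := by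
      intro x hx
      have hux : u x = 0 := by by_contra h; exact hx (hsupp x h)
      simp [hux]
    rw [tsum_eq_sum h1, Finset.mul_sum]
    refine Finset.sum_congr rfl fun x _ => ?_
    by_cases hux : u x = 0
    · simp [hux]
    · have hT : graphT b V f x
          = (1/2 : ℝ) * ∑ y ∈ F, b x y * (f x - f y) * (V x + V y) := by
        unfold graphT graphLap graphGradInner
        have e1 : ∑' y, b x y * (f x - f y) = ∑ y ∈ F, b x y * (f x - f y) := by
          refine tsum_eq_sum fun y hy => ?_
          by_cases hb : b x y = 0
          · simp [hb]
          · exact absurd (hnb x y hux hb) hy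
        have e2 : ∑' y, b x y * (f x - f y) * (V x - V y)
            = ∑ y ∈ F, b x y * (f x - f y) * (V x - V y) := by
          refine tsum_eq_sum fun y hy => ?_
          by_cases hb : b x y = 0
          · simp [hb]
          · exact absurd (hnb x y hux hb) hy
        rw [e1, e2, Finset.mul_sum, Finset.mul_sum, Finset.mul_sum,
          ← Finset.sum_sub_distrib]
        exact Finset.sum_congr rfl fun y _ => by ring
      rw [hT]
      have : (1/2 : ℝ) * (∑ y ∈ F, b x y * (f x - f y) * (V x + V y)) / f x * u x ^ 2
          = (1/2 : ℝ) * ((∑ y ∈ F, b x y * (f x - f y) * (V x + V y)) * u x ^ 2 / f x) := by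
        ring
      rw [this, Finset.sum_mul, Finset.sum_div]
  -- Step 3: RHS sum
  have key3 : ∑' x, ∑' y, b x y * V x *
        (Real.sqrt (f x / f y) * u y - Real.sqrt (f y / f x) * u x) ^ 2
      = ∑ x ∈ F, ∑ y ∈ F, b x y * V x *
        (Real.sqrt (f x / f y) * u y - Real.sqrt (f y / f x) * u x) ^ 2 := by
    have hin : ∀ x, (∑' y, b x y * V x *
        (Real.sqrt (f x / f y) * u y - Real.sqrt (f y / f x) * u x) ^ 2)
        = ∑ y ∈ F, b x y * V x *
        (Real.sqrt (f x / f y) * u y - Real.sqrt (f y / f x) * u x) ^ 2 := by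
      intro x
      refine tsum_eq_sum fun y hy => ?_
      by_cases hb : b x y = 0
      · simp [hb]
      · have hux : u x = 0 := by by_contra h; exact hy (hnb x y h hb)
        have huy : u y = 0 := by by_contra h; exact hy (hsupp y h)
        simp [hux, huy]
    rw [tsum_congr hin]
    refine tsum_eq_sum fun x hx => ?_
    refine Finset.sum_eq_zero fun y _ => ?_
    by_cases hb : b x y = 0
    · simp [hb]
    · have hux : u x = 0 := by by_contra h; exact hx (hsupp x h)
      have huy : u y = 0 := by by_contra h; exact hx (hnb' x y h hb)
      simp [hux, huy]
  rw [key1, key2, key3]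
  -- pointwise expansion of the square
  have hterm : ∀ x y, b x y * V x *
        (Real.sqrt (f x / f y) * u y - Real.sqrt (f y / f x) * u x) ^ 2
      = b x y * V x * (u x - u y) ^ 2
        + b x y * V x * (f x - f y) * u y ^ 2 / f y
        - b x y * V x * (f x - f y) * u x ^ 2 / f x := by
    intro x y
    have hx0 : f x ≠ 0 := (hf x).ne'
    have hy0 : f y ≠ 0 := (hf y).ne'
    have hp2 : Real.sqrt (f x / f y) ^ 2 = f x / f y := Real.sq_sqrt (div_nonneg (hf x).le (hf y).le)
    have hq2 : Real.sqrt (f y / f x) ^ 2 = f y / f x := Real.sq_sqrt (div_nonneg (hf y).le (hf x).le)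
    have hpq : Real.sqrt (f x / f y) * Real.sqrt (f y / f x) = 1 := by
      rw [← Real.sqrt_mul (div_nonneg (hf x).le (hf y).le),
        show f x / f y * (f y / f x) = 1 by field_simp]
      exact Real.sqrt_one
    have expand : (Real.sqrt (f x / f y) * u y - Real.sqrt (f y / f x) * u x) ^ 2
        = Real.sqrt (f x / f y) ^ 2 * u y ^ 2
          - 2 * (Real.sqrt (f x / f y) * Real.sqrt (f y / f x)) * (u x * u y)
          + Real.sqrt (f y / f x) ^ 2 * u x ^ 2 := by ring
    rw [expand, hp2, hq2, hpq]
    field_simp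
    ring
  -- abbreviations for the three double sums
  set SA : ℝ := ∑ x ∈ F, ∑ y ∈ F, b x y * V x * (f x - f y) * u y ^ 2 / f y with hSA
  set SB : ℝ := ∑ x ∈ F, ∑ y ∈ F, b x y * V x * (f x - f y) * u x ^ 2 / f x with hSB
  set SC : ℝ := ∑ x ∈ F, ∑ y ∈ F, b x y * V y * (f x - f y) * u x ^ 2 / f x with hSC
  have hA : SA = -SC := by
    rw [hSA, Finset.sum_comm]
    have : ∀ y ∈ F, ∀ x ∈ F, b x y * V x * (f x - f y) * u y ^ 2 / f y
        = -(b y x * V x * (f y - f x) * u y ^ 2 / f y) := by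
      intro y _ x _
      rw [hsym x y]; ring
    rw [Finset.sum_congr rfl fun y hy => Finset.sum_congr rfl fun x hx => this y hy x hx]
    simp [hSC, Finset.sum_neg_distrib]
  have hS2 : ∑ x ∈ F, ∑ y ∈ F, b x y * (f x - f y) * (V x + V y) * u x ^ 2 / f x
      = SB + SC := by
    rw [hSB, hSC, ← Finset.sum_add_distrib]
    refine Finset.sum_congr rfl fun x _ => ?_
    rw [← Finset.sum_add_distrib]
    refine Finset.sum_congr rfl fun y _ => ?_
    ring
  have hS3 : ∑ x ∈ F, ∑ y ∈ F, b x y * V x *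
        (Real.sqrt (f x / f y) * u y - Real.sqrt (f y / f x) * u x) ^ 2
      = (∑ x ∈ F, ∑ y ∈ F, b x y * V x * (u x - u y) ^ 2) + SA - SB := by
    rw [Finset.sum_congr rfl fun x _ => Finset.sum_congr rfl fun y _ => hterm x y]
    rw [hSA, hSB]
    simp [Finset.sum_add_distrib, Finset.sum_sub_distrib]
  rw [hS2, hS3]
  linarith [hA]
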